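/- arXiv:1810.00745 — 2 statements merged into one kernel-verified Lean document; each statement's English description precedes it below -/
import Mathlib

section
/- Composite Simpson rule error bound: if f : ℝ → ℝ is four times continuously differentiable on [a,b], then |∫_a^b f(x) dx − (h/6)·∑_{i=1}^{N} (f(x_{i−1}) + 4·f((x_{i−1}+x_i)/2) + f(x_i))| ≤ ((b−a)/2880)·h⁴·sup_{x ∈ [a,b]} |f⁽⁴⁾(x)|. -/
open scoped BigOperators

open Set MeasureTheory intervalIntegral Topology

set_option maxHeartbeats 1000000

lemma simpson_step_bound {φ ψ : ℝ → ℝ} {H C : ℝ} {n : ℕ}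
    (hφc : ContinuousOn φ (Set.Icc 0 H))
    (hφd : ∀ t ∈ Set.Ioo 0 H, HasDerivAt φ (ψ t) t)
    (hψc : ContinuousOn ψ (Set.Icc 0 H))
    (hφ0 : φ 0 = 0)
    (hψb : ∀ t ∈ Set.Icc 0 H, |ψ t| ≤ C * t ^ n) :
    ∀ t ∈ Set.Icc 0 H, |φ t| ≤ C / (n + 1) * t ^ (n + 1) := by
  intro t ht
  obtain ⟨ht0, htH⟩ := ht
  have hsub : Set.Icc (0:ℝ) t ⊆ Set.Icc 0 H := Set.Icc_subset_Icc le_rfl htH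
  have hψint : IntervalIntegrable ψ volume 0 t := by
    have : ContinuousOn ψ (Set.uIcc 0 t) := by
      rw [Set.uIcc_of_le ht0]; exact hψc.mono hsub
    exact this.intervalIntegrable
  have key : ∫ s in (0:ℝ)..t, ψ s = φ t - φ 0 := by
    apply intervalIntegral.integral_eq_sub_of_hasDeriv_right_of_le ht0
      (hφc.mono hsub) ?_ hψint
    intro s hs
    exact (hφd s ⟨hs.1, lt_of_lt_of_le hs.2 htH⟩).hasDerivWithinAt
  have h1 : |φ t| = |∫ s in (0:ℝ)..t, ψ s| := by rw [key, hφ0, sub_zero]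
  rw [h1]
  have h2 : |∫ s in (0:ℝ)..t, ψ s| ≤ ∫ s in (0:ℝ)..t, |ψ s| :=
    intervalIntegral.abs_integral_le_integral_abs ht0
  have h3 : (∫ s in (0:ℝ)..t, |ψ s|) ≤ ∫ s in (0:ℝ)..t, C * s ^ n := by
    apply intervalIntegral.integral_mono_on ht0 hψint.abs
    · exact (Continuous.intervalIntegrable (by continuity) 0 t)
    · intro s hs
      exact hψb s ⟨hs.1, le_trans hs.2 htH⟩
  have h4 : (∫ s in (0:ℝ)..t, C * s ^ n) = C / (n + 1) * t ^ (n + 1) := by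
    rw [intervalIntegral.integral_const_mul, integral_pow]
    simp
    ring
  linarith [h2, h3, le_of_eq h4]

/-- Simpson's rule error on a single subinterval. -/
lemma simpson_local {a b : ℝ} (hab : a < b) {f : ℝ → ℝ}
    (hf : ContDiffOn ℝ 4 f (Set.Icc a b)) {M : ℝ}
    (hM : ∀ x ∈ Set.Icc a b, |iteratedDerivWithin 4 f (Set.Icc a b) x| ≤ M)
    {c d : ℝ} (hac : a ≤ c) (hcd : c ≤ d) (hdb : d ≤ b) :
    |(∫ t in c..d, f t) - (d - c) / 6 * (f c + 4 * f ((c + d) / 2) + f d)| ≤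
      (d - c) ^ 5 / 2880 * M := by
  rcases eq_or_lt_of_le hcd with rfl | hcd
  · simp
  -- setup
  set S := Set.Icc a b with hS
  have hUD : UniqueDiffOn ℝ S := uniqueDiffOn_Icc hab
  set g : ℕ → ℝ → ℝ := fun k => iteratedDerivWithin k f S with hgdef
  have hg0 : g 0 = f := by simp [hgdef]
  have hcont : ∀ k : ℕ, k ≤ 4 → ContinuousOn (g k) S := by
    intro k hk
    exact hf.continuousOn_iteratedDerivWithin (by exact_mod_cast hk) hUD
  have hder : ∀ k : ℕ, k < 4 → ∀ y ∈ S, HasDerivWithinAt (g k) (g (k+1) y) S y := by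
    intro k hk y hy
    have hd : DifferentiableOn ℝ (g k) S :=
      hf.differentiableOn_iteratedDerivWithin (by exact_mod_cast hk) hUD
    have : g (k+1) y = derivWithin (g k) S y := congrFun iteratedDerivWithin_succ y
    rw [this]
    exact (hd y hy).hasDerivWithinAt
  have hderI : ∀ k : ℕ, k < 4 → ∀ y ∈ Set.Ioo a b, HasDerivAt (g k) (g (k+1) y) y := by
    intro k hk y hy
    exact (hder k hk y (Set.Ioo_subset_Icc_self hy)).hasDerivAt
      (Icc_mem_nhds hy.1 hy.2)
  -- midpoint and half-length
  set m : ℝ := (c + d) / 2 with hm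
  set H : ℝ := (d - c) / 2 with hHdef
  have hH : 0 < H := by rw [hHdef]; linarith
  have hmS : m ∈ S := by
    refine ⟨?_, ?_⟩ <;> rw [hm] <;> linarith
  have hmem : ∀ t ∈ Set.Icc (0:ℝ) H, m + t ∈ S ∧ m - t ∈ S := by
    intro t ht
    obtain ⟨h0, h1⟩ := ht
    rw [hHdef] at h1
    refine ⟨⟨?_, ?_⟩, ?_, ?_⟩ <;> rw [hm] <;> linarith
  have hmem' : ∀ t ∈ Set.Ioo (0:ℝ) H, m + t ∈ Set.Ioo a b ∧ m - t ∈ Set.Ioo a b := by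
    intro t ht
    obtain ⟨h0, h1⟩ := ht
    rw [hHdef] at h1
    refine ⟨⟨?_, ?_⟩, ?_, ?_⟩ <;> rw [hm] <;> linarith
  -- continuity of compositions
  have hmapP : Set.MapsTo (fun t : ℝ => m + t) (Set.Icc 0 H) S :=
    fun t ht => (hmem t ht).1
  have hmapQ : Set.MapsTo (fun t : ℝ => m - t) (Set.Icc 0 H) S :=
    fun t ht => (hmem t ht).2
  have hccP : ∀ k : ℕ, k ≤ 4 → ContinuousOn (fun t => g k (m + t)) (Set.Icc 0 H) :=
    fun k hk => (hcont k hk).comp (by continuity : Continuous fun t : ℝ => m + t).continuousOn hmapP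
  have hccQ : ∀ k : ℕ, k ≤ 4 → ContinuousOn (fun t => g k (m - t)) (Set.Icc 0 H) :=
    fun k hk => (hcont k hk).comp (by continuity : Continuous fun t : ℝ => m - t).continuousOn hmapQ
  -- derivatives of compositions at interior points
  have hdP : ∀ k : ℕ, k < 4 → ∀ t ∈ Set.Ioo (0:ℝ) H,
      HasDerivAt (fun s => g k (m + s)) (g (k+1) (m + t)) t := by
    intro k hk t ht
    have h1 : HasDerivAt (fun s : ℝ => m + s) 1 t := by
      simpa using (hasDerivAt_id t).const_add m
    have := (hderI k hk _ (hmem' t ht).1).comp t h1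
    simpa [Function.comp_def] using this
  have hdQ : ∀ k : ℕ, k < 4 → ∀ t ∈ Set.Ioo (0:ℝ) H,
      HasDerivAt (fun s => g k (m - s)) (-(g (k+1) (m - t))) t := by
    intro k hk t ht
    have h1 : HasDerivAt (fun s : ℝ => m - s) (-1) t := by
      simpa using (hasDerivAt_id t).const_sub m
    have := (hderI k hk _ (hmem' t ht).2).comp t h1
    simpa [Function.comp_def] using this
  -- the primitive
  set A : ℝ → ℝ := fun s => ∫ u in m..s, f u with hA
  have hfc : ContinuousOn f S := hf.continuousOn
  have hAderiv : ∀ y ∈ Set.Ioo a b, HasDerivAt A (f y) y := by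
    intro y hy
    have hyS : y ∈ S := Set.Ioo_subset_Icc_self hy
    have hint : IntervalIntegrable f volume m y := by
      have : ContinuousOn f (Set.uIcc m y) := hfc.mono (Set.uIcc_subset_Icc hmS hyS)
      exact this.intervalIntegrable
    have hmeas : StronglyMeasurableAtFilter f (𝓝 y) volume :=
      (hfc.mono Set.Ioo_subset_Icc_self).stronglyMeasurableAtFilter isOpen_Ioo y hy
    have hcy : ContinuousAt f y := hfc.continuousAt (Icc_mem_nhds hy.1 hy.2)
    exact intervalIntegral.integral_hasDerivAt_right hint hmeas hcy
  have hAcont : ContinuousOn A S := by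
    have hint : IntervalIntegrable f volume a b := by
      have : ContinuousOn f (Set.uIcc a b) := by
        rwa [Set.uIcc_of_le hab.le]
      exact this.intervalIntegrable
    have := continuousOn_primitive_interval' hint
      (by rw [Set.uIcc_of_le hab.le]; exact hmS)
    rwa [Set.uIcc_of_le hab.le] at this
  -- the four functions
  set F0 : ℝ → ℝ := fun t => A (m + t) - A (m - t)
    - t / 3 * (f (m - t) + 4 * f m + f (m + t)) with hF0
  set F1 : ℝ → ℝ := fun t => 2 / 3 * (f (m + t) + f (m - t)) - 4 / 3 * f m
    - t / 3 * (g 1 (m + t) - g 1 (m - t)) with hF1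
  set F2 : ℝ → ℝ := fun t => 1 / 3 * (g 1 (m + t) - g 1 (m - t))
    - t / 3 * (g 2 (m + t) + g 2 (m - t)) with hF2
  set F3 : ℝ → ℝ := fun t => -(t / 3) * (g 3 (m + t) - g 3 (m - t)) with hF3
  have hM0 : 0 ≤ M := le_trans (abs_nonneg _) (hM a (Set.left_mem_Icc.2 hab.le))
  -- bound on F3
  have b3 : ∀ t ∈ Set.Icc (0:ℝ) H, |F3 t| ≤ 2 * M / 3 * t ^ 2 := by
    intro t ht
    obtain ⟨hP, hQ⟩ := hmem t ht
    have key : ‖g 3 (m + t) - g 3 (m - t)‖ ≤ M * ‖(m + t) - (m - t)‖ := by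
      apply (convex_Icc a b).norm_image_sub_le_of_norm_hasDerivWithin_le
        (fun y hy => hder 3 (by norm_num) y hy)
        (fun y hy => by simpa [Real.norm_eq_abs] using hM y hy) hQ hP
    have h2t : (m + t) - (m - t) = 2 * t := by ring
    rw [h2t, Real.norm_eq_abs, Real.norm_eq_abs, abs_of_nonneg (by linarith [ht.1] : (0:ℝ) ≤ 2 * t)] at key
    have : |F3 t| = t / 3 * |g 3 (m + t) - g 3 (m - t)| := by
      rw [hF3]
      rw [abs_mul, abs_neg, abs_of_nonneg (by linarith [ht.1] : (0:ℝ) ≤ t / 3)]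
    rw [this]
    calc t / 3 * |g 3 (m + t) - g 3 (m - t)| ≤ t / 3 * (M * (2 * t)) :=
          mul_le_mul_of_nonneg_left key (by linarith [ht.1])
      _ = 2 * M / 3 * t ^ 2 := by ring
  -- derivative facts
  have hd2 : ∀ t ∈ Set.Ioo (0:ℝ) H, HasDerivAt F2 (F3 t) t := by
    intro t ht
    have h1 := hdP 1 (by norm_num) t ht
    have h2 := hdQ 1 (by norm_num) t ht
    have h3 := hdP 2 (by norm_num) t ht
    have h4 := hdQ 2 (by norm_num) t ht
    have hid : HasDerivAt (fun s : ℝ => s / 3) (1 / 3) t := (hasDerivAt_id t).div_const 3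
    have := ((h1.sub h2).const_mul (1/3 : ℝ)).sub (hid.mul (h3.add h4))
    convert this using 1
    · rfl
    · rfl
    · rfl
    rw [hF3]; simp only [Pi.add_apply, Pi.sub_apply]; ring
  have hd1 : ∀ t ∈ Set.Ioo (0:ℝ) H, HasDerivAt F1 (F2 t) t := by
    intro t ht
    have h1 := hdP 0 (by norm_num) t ht
    have h2 := hdQ 0 (by norm_num) t ht
    simp only [hg0] at h1 h2
    have h3 := hdP 1 (by norm_num) t ht
    have h4 := hdQ 1 (by norm_num) t ht
    have hid : HasDerivAt (fun s : ℝ => s / 3) (1 / 3) t := (hasDerivAt_id t).div_const 3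
    have := (((h1.add h2).const_mul (2/3 : ℝ)).sub (hasDerivAt_const t (4 / 3 * f m))).sub
      (hid.mul (h3.sub h4))
    convert this using 1
    · rfl
    · rfl
    · rfl
    rw [hF2]; simp only [Pi.add_apply, Pi.sub_apply]; ring
  have hd0 : ∀ t ∈ Set.Ioo (0:ℝ) H, HasDerivAt F0 (F1 t) t := by
    intro t ht
    have hiP : HasDerivAt (fun s : ℝ => m + s) 1 t := by
      simpa using (hasDerivAt_id t).const_add m
    have hiQ : HasDerivAt (fun s : ℝ => m - s) (-1) t := by
      simpa using (hasDerivAt_id t).const_sub m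
    have hA1 : HasDerivAt (fun s => A (m + s)) (f (m + t)) t := by
      have := (hAderiv _ (hmem' t ht).1).comp t hiP
      simpa [Function.comp_def] using this
    have hA2 : HasDerivAt (fun s => A (m - s)) (-f (m - t)) t := by
      have := (hAderiv _ (hmem' t ht).2).comp t hiQ
      simpa [Function.comp_def] using this
    have h1 := hdP 0 (by norm_num) t ht
    have h2 := hdQ 0 (by norm_num) t ht
    simp only [hg0] at h1 h2
    have hid : HasDerivAt (fun s : ℝ => s / 3) (1 / 3) t := (hasDerivAt_id t).div_const 3
    have := (hA1.sub hA2).sub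
      (hid.mul ((h2.add (hasDerivAt_const t (4 * f m))).add h1))
    convert this using 1
    · rfl
    · rfl
    · rfl
    rw [hF1]; simp only [Pi.add_apply, Pi.sub_apply]; ring
  -- continuity facts
  have hcP0 : ContinuousOn (fun t => f (m + t)) (Set.Icc 0 H) := by
    have := hccP 0 (by norm_num); simpa only [hg0] using this
  have hcQ0 : ContinuousOn (fun t => f (m - t)) (Set.Icc 0 H) := by
    have := hccQ 0 (by norm_num); simpa only [hg0] using this
  have hct : ContinuousOn (fun t : ℝ => t / 3) (Set.Icc 0 H) :=
    (continuous_id.div_const 3).continuousOn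
  have cF3 : ContinuousOn F3 (Set.Icc 0 H) := by
    rw [hF3]
    exact (hct.neg).mul ((hccP 3 (by norm_num)).sub (hccQ 3 (by norm_num)))
  have cF2 : ContinuousOn F2 (Set.Icc 0 H) := by
    rw [hF2]
    exact (continuousOn_const.mul ((hccP 1 (by norm_num)).sub (hccQ 1 (by norm_num)))).sub
      (hct.mul ((hccP 2 (by norm_num)).add (hccQ 2 (by norm_num))))
  have cF1 : ContinuousOn F1 (Set.Icc 0 H) := by
    rw [hF1]
    exact ((continuousOn_const.mul (hcP0.add hcQ0)).sub continuousOn_const).sub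
      (hct.mul ((hccP 1 (by norm_num)).sub (hccQ 1 (by norm_num))))
  have cF0 : ContinuousOn F0 (Set.Icc 0 H) := by
    rw [hF0]
    have c1 : ContinuousOn (fun t => A (m + t)) (Set.Icc 0 H) :=
      hAcont.comp (by continuity : Continuous fun t : ℝ => m + t).continuousOn hmapP
    have c2 : ContinuousOn (fun t => A (m - t)) (Set.Icc 0 H) :=
      hAcont.comp (by continuity : Continuous fun t : ℝ => m - t).continuousOn hmapQ
    exact (c1.sub c2).sub (hct.mul ((hcQ0.add continuousOn_const).add hcP0))
  -- zeros
  have z2 : F2 0 = 0 := by rw [hF2]; ring_nf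
  have z1 : F1 0 = 0 := by rw [hF1]; ring_nf
  have z0 : F0 0 = 0 := by rw [hF0]; simp
  -- chain the bounds
  have b2 : ∀ t ∈ Set.Icc (0:ℝ) H, |F2 t| ≤ 2 * M / 9 * t ^ 3 := by
    intro t ht
    refine le_trans (simpson_step_bound cF2 hd2 cF3 z2 b3 t ht) (le_of_eq ?_)
    push_cast; ring
  have b1 : ∀ t ∈ Set.Icc (0:ℝ) H, |F1 t| ≤ M / 18 * t ^ 4 := by
    intro t ht
    refine le_trans (simpson_step_bound cF1 hd1 cF2 z1 b2 t ht) (le_of_eq ?_)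
    push_cast; ring
  have b0 : ∀ t ∈ Set.Icc (0:ℝ) H, |F0 t| ≤ M / 90 * t ^ 5 := by
    intro t ht
    refine le_trans (simpson_step_bound cF0 hd0 cF1 z0 b1 t ht) (le_of_eq ?_)
    push_cast; ring
  -- conclusion
  have hfin := b0 H ⟨hH.le, le_rfl⟩
  have hm1 : m + H = d := by rw [hm, hHdef]; ring
  have hm2 : m - H = c := by rw [hm, hHdef]; ring
  have hcS : c ∈ S := ⟨hac, le_trans hcd.le hdb⟩
  have hdS : d ∈ S := ⟨le_trans hac hcd.le, hdb⟩
  have hintc : IntervalIntegrable f volume m c :=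
    (hfc.mono (Set.uIcc_subset_Icc hmS hcS)).intervalIntegrable
  have hintd : IntervalIntegrable f volume m d :=
    (hfc.mono (Set.uIcc_subset_Icc hmS hdS)).intervalIntegrable
  have hAeq : A d - A c = ∫ t in c..d, f t :=
    intervalIntegral.integral_interval_sub_left hintd hintc
  have hF0H : F0 H = (∫ t in c..d, f t) - (d - c) / 6 * (f c + 4 * f m + f d) := by
    rw [hF0]
    simp only [hm1, hm2]
    rw [hAeq, hHdef]
    ring
  rw [← hm] at *
  calc |(∫ t in c..d, f t) - (d - c) / 6 * (f c + 4 * f m + f d)|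
      = |F0 H| := by rw [hF0H]
    _ ≤ M / 90 * H ^ 5 := hfin
    _ = (d - c) ^ 5 / 2880 * M := by rw [hHdef]; ring


/-- Composite Simpson rule error bound: if `f` is four times continuously differentiable on
`[a,b]`, `h = (b-a)/N` and `x i = a + i*h`, then
`|∫_a^b f - (h/6) * ∑_{i=1}^N (f(x_{i-1}) + 4 f((x_{i-1}+x_i)/2) + f(x_i))|
  ≤ ((b-a)/2880) * h^4 * sup_{[a,b]} |f⁽⁴⁾|`. -/
theorem simpson_rule_error (a b : ℝ) (hab : a < b) (N : ℕ) (hN : 0 < N)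
    (h : ℝ) (hh : h = (b - a) / N) (x : ℕ → ℝ) (hx : ∀ i, x i = a + i * h)
    (f : ℝ → ℝ) (hf : ContDiffOn ℝ 4 f (Set.Icc a b)) :
    |(∫ t in a..b, f t) -
        h / 6 * ∑ i ∈ Finset.range N,
          (f (x i) + 4 * f ((x i + x (i + 1)) / 2) + f (x (i + 1)))| ≤
      (b - a) / 2880 * h ^ 4 *
        ⨆ t ∈ Set.Icc a b, |iteratedDerivWithin 4 f (Set.Icc a b) t| := by
  have hba : 0 < b - a := sub_pos.2 hab
  have hN' : (0:ℝ) < N := by exact_mod_cast hN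
  have hh0 : 0 < h := by rw [hh]; positivity
  have hxi : ∀ i : ℕ, x (i + 1) = x i + h := by
    intro i; rw [hx, hx]; push_cast; ring
  have hx0 : x 0 = a := by rw [hx]; simp
  have hxN : x N = b := by rw [hx, hh]; field_simp; ring
  have hxmono : ∀ i j : ℕ, i ≤ j → x i ≤ x j := by
    intro i j hij
    rw [hx, hx]
    have hij' : (i:ℝ) ≤ j := by exact_mod_cast hij
    nlinarith [hh0]
  have hxS : ∀ i : ℕ, i ≤ N → x i ∈ Set.Icc a b := fun i hi =>
    ⟨hx0 ▸ hxmono 0 i (Nat.zero_le _), hxN ▸ hxmono i N hi⟩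
  set g4 : ℝ → ℝ := fun t => iteratedDerivWithin 4 f (Set.Icc a b) t with hg4
  set M : ℝ := ⨆ t ∈ Set.Icc a b, |g4 t| with hMdef
  have hg4c : ContinuousOn g4 (Set.Icc a b) :=
    hf.continuousOn_iteratedDerivWithin le_rfl (uniqueDiffOn_Icc hab)
  obtain ⟨C, hC⟩ := isCompact_Icc.exists_bound_of_continuousOn hg4c
  have hbdd : BddAbove (Set.range fun t => ⨆ _ : t ∈ Set.Icc a b, |g4 t|) := by
    refine ⟨max C 0, ?_⟩
    rintro _ ⟨t, rfl⟩
    show (⨆ _ : t ∈ Set.Icc a b, |g4 t|) ≤ max C 0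
    by_cases ht : t ∈ Set.Icc a b
    · rw [ciSup_pos (f := fun _ : t ∈ Set.Icc a b => |g4 t|) ht]
      exact le_trans (by simpa using hC t ht) (le_max_left _ _)
    · haveI : IsEmpty (t ∈ Set.Icc a b) := ⟨ht⟩
      rw [Real.iSup_of_isEmpty]
      exact le_max_right _ _
  have hM : ∀ y ∈ Set.Icc a b, |g4 y| ≤ M := by
    intro y hy
    calc |g4 y| = ⨆ _ : y ∈ Set.Icc a b, |g4 y| :=
          (ciSup_pos (f := fun _ : y ∈ Set.Icc a b => |g4 y|) hy).symm
      _ ≤ M := le_ciSup hbdd y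
  have hint : ∀ i, i < N → IntervalIntegrable f MeasureTheory.volume (x i) (x (i + 1)) := by
    intro i hi
    exact (hf.continuousOn.mono
      (Set.uIcc_subset_Icc (hxS i hi.le) (hxS (i + 1) hi))).intervalIntegrable
  have hsplit : ∑ i ∈ Finset.range N, ∫ t in x i..x (i + 1), f t = ∫ t in a..b, f t := by
    rw [← hx0, ← hxN] at *
    exact intervalIntegral.sum_integral_adjacent_intervals hint
  have hrw : (∫ t in a..b, f t) -
      h / 6 * ∑ i ∈ Finset.range N,
        (f (x i) + 4 * f ((x i + x (i + 1)) / 2) + f (x (i + 1))) =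
      ∑ i ∈ Finset.range N, ((∫ t in x i..x (i + 1), f t)
        - h / 6 * (f (x i) + 4 * f ((x i + x (i + 1)) / 2) + f (x (i + 1)))) := by
    rw [Finset.sum_sub_distrib, hsplit, ← Finset.mul_sum]
  rw [hrw]
  have hterm : ∀ i ∈ Finset.range N, |(∫ t in x i..x (i + 1), f t)
      - h / 6 * (f (x i) + 4 * f ((x i + x (i + 1)) / 2) + f (x (i + 1)))| ≤
      h ^ 5 / 2880 * M := by
    intro i hi
    rw [Finset.mem_range] at hi
    have hd : x (i + 1) - x i = h := by rw [hxi]; ring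
    have := simpson_local hab hf hM (hxS i hi.le).1
      (by rw [hxi]; linarith : x i ≤ x (i + 1)) (hxS (i + 1) hi).2
    rw [hd] at this
    exact this
  calc |∑ i ∈ Finset.range N, ((∫ t in x i..x (i + 1), f t)
        - h / 6 * (f (x i) + 4 * f ((x i + x (i + 1)) / 2) + f (x (i + 1))))|
      ≤ ∑ i ∈ Finset.range N, |(∫ t in x i..x (i + 1), f t)
        - h / 6 * (f (x i) + 4 * f ((x i + x (i + 1)) / 2) + f (x (i + 1)))| :=
        Finset.abs_sum_le_sum_abs _ _
    _ ≤ ∑ _i ∈ Finset.range N, h ^ 5 / 2880 * M := Finset.sum_le_sum hterm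
    _ = N * (h ^ 5 / 2880 * M) := by
        rw [Finset.sum_const, Finset.card_range]; simp [nsmul_eq_mul]
    _ = (b - a) / 2880 * h ^ 4 * M := by
        have hNh : (N:ℝ) * h = b - a := by rw [hh]; field_simp
        rw [← hNh]; ring
end

section
/- Automatic differentiation recurrence for sine and cosine: if u : ℝ → ℝ is n times continuously differentiable on a neighborhood of x₀, and s = sin ∘ u, c = cos ∘ u, then for every k with 1 ≤ k ≤ n: (s)_k = (1/k) · ∑_{j=0}^{k−1} (j+1) · (c)_{k−1−j} · (u)_{j+1} and (c)_k = −(1/k) · ∑_{j=0}^{k−1} (j+1) · (s)_{k−1−j} · (u)_{j+1}. -/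
open scoped BigOperators
open Finset

private lemma iteratedDerivWithin_of_isOpen' {s : Set ℝ} (hs : IsOpen s) (m : ℕ)
    (f : ℝ → ℝ) {x : ℝ} (hx : x ∈ s) :
    iteratedDerivWithin m f s x = iteratedDeriv m f x := by
  rw [iteratedDerivWithin_eq_iteratedFDerivWithin, iteratedDeriv_eq_iteratedFDeriv,
    iteratedFDerivWithin_of_isOpen m hs hx]

private lemma iteratedDeriv_add_of_isOpen {s : Set ℝ} (hs : IsOpen s) {m : ℕ}
    {F G : ℝ → ℝ} (hF : ContDiffOn ℝ m F s) (hG : ContDiffOn ℝ m G s)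
    {x : ℝ} (hx : x ∈ s) :
    iteratedDeriv m (fun y => F y + G y) x = iteratedDeriv m F x + iteratedDeriv m G x := by
  rw [← iteratedDerivWithin_of_isOpen' hs m _ hx, ← iteratedDerivWithin_of_isOpen' hs m F hx,
    ← iteratedDerivWithin_of_isOpen' hs m G hx]
  exact iteratedDerivWithin_add hx hs.uniqueDiffOn (hF x hx) (hG x hx)

private lemma pascal_sum (m : ℕ) (a b : ℕ → ℝ) :
    (∑ i ∈ range (m + 1), (m.choose i : ℝ) * a (i + 1) * b (m - i)) +
      ∑ i ∈ range (m + 1), (m.choose i : ℝ) * a i * b (m + 1 - i) =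
    ∑ i ∈ range (m + 2), ((m + 1).choose i : ℝ) * a i * b (m + 1 - i) := by
  rw [Finset.sum_range_succ' (fun i => (((m + 1).choose i : ℝ)) * a i * b (m + 1 - i)) (m + 1),
      Finset.sum_range_succ' (fun i => ((m.choose i : ℝ)) * a i * b (m + 1 - i)) m]
  simp only [Nat.succ_sub_succ, Nat.choose_succ_succ, Nat.cast_add, add_mul,
    Nat.choose_zero_right, Nat.cast_one, Nat.sub_zero]
  rw [Finset.sum_add_distrib,
    Finset.sum_range_succ (fun i => ((m.choose (i + 1) : ℝ)) * a (i + 1) * b (m - i)) m]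
  simp [Nat.choose_succ_self]
  ring

private lemma leibniz_of_isOpen {s : Set ℝ} (hs : IsOpen s) (m : ℕ) :
    ∀ (f g : ℝ → ℝ), ContDiffOn ℝ m f s → ContDiffOn ℝ m g s → ∀ x ∈ s,
      iteratedDeriv m (fun y => f y * g y) x =
        ∑ i ∈ range (m + 1),
          (m.choose i : ℝ) * iteratedDeriv i f x * iteratedDeriv (m - i) g x := by
  induction m with
  | zero => intro f g _ _ x hx; simp
  | succ m IH =>
    intro f g hf hg x hx
    have hf' : ContDiffOn ℝ m (deriv f) s := hf.deriv_of_isOpen hs (by exact_mod_cast le_refl _)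
    have hg' : ContDiffOn ℝ m (deriv g) s := hg.deriv_of_isOpen hs (by exact_mod_cast le_refl _)
    have hfm : ContDiffOn ℝ m f s := hf.of_succ
    have hgm : ContDiffOn ℝ m g s := hg.of_succ
    have hdiff_f : ∀ y ∈ s, DifferentiableAt ℝ f y := fun y hy =>
      (hf.differentiableOn (by simp) y hy).differentiableAt
        (hs.mem_nhds hy)
    have hdiff_g : ∀ y ∈ s, DifferentiableAt ℝ g y := fun y hy =>
      (hg.differentiableOn (by simp) y hy).differentiableAt
        (hs.mem_nhds hy)
    have step1 : iteratedDeriv (m + 1) (fun y => f y * g y) x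
        = iteratedDeriv m (fun y => deriv f y * g y + f y * deriv g y) x := by
      rw [iteratedDeriv_succ']
      refine Filter.EventuallyEq.iteratedDeriv_eq m ?_
      filter_upwards [hs.mem_nhds hx] with y hy
      exact deriv_mul (hdiff_f y hy) (hdiff_g y hy)
    have step2 : iteratedDeriv m (fun y => deriv f y * g y + f y * deriv g y) x
        = iteratedDeriv m (fun y => deriv f y * g y) x
          + iteratedDeriv m (fun y => f y * deriv g y) x :=
      iteratedDeriv_add_of_isOpen hs (hf'.mul hgm) (hfm.mul hg') hx
    have hshift : ∀ (F : ℝ → ℝ) (i : ℕ), iteratedDeriv i (deriv F) x = iteratedDeriv (i+1) F x :=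
      fun F i => by rw [iteratedDeriv_succ']
    have e1 : ∑ i ∈ range (m + 1),
          (m.choose i : ℝ) * iteratedDeriv i (deriv f) x * iteratedDeriv (m - i) g x
        = ∑ i ∈ range (m + 1),
          (m.choose i : ℝ) * iteratedDeriv (i + 1) f x * iteratedDeriv (m - i) g x :=
      Finset.sum_congr rfl fun i _ => by rw [hshift f i]
    have e2 : ∑ i ∈ range (m + 1),
          (m.choose i : ℝ) * iteratedDeriv i f x * iteratedDeriv (m - i) (deriv g) x
        = ∑ i ∈ range (m + 1),
          (m.choose i : ℝ) * iteratedDeriv i f x * iteratedDeriv (m + 1 - i) g x := by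
      refine Finset.sum_congr rfl fun i hi => ?_
      have hi' : i ≤ m := Nat.lt_succ_iff.mp (Finset.mem_range.mp hi)
      have : m + 1 - i = (m - i) + 1 := by omega
      rw [this, ← hshift g (m - i)]
    rw [step1, step2, IH (deriv f) g hf' hgm x hx, IH f (deriv g) hfm hg' x hx, e1, e2]
    exact pascal_sum m (fun i => iteratedDeriv i f x) (fun i => iteratedDeriv i g x)

private lemma key_sum (m : ℕ) (A B : ℕ → ℝ) :
    (∑ i ∈ range (m + 1), (m.choose i : ℝ) * A i * B (m - i)) / (Nat.factorial (m + 1))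
      = (1 / ((m : ℝ) + 1)) * ∑ j ∈ range (m + 1),
          ((j : ℝ) + 1) * (A (m - j) / (Nat.factorial (m - j)))
            * (B j / (Nat.factorial (j + 1))) := by
  rw [Finset.sum_div, Finset.mul_sum,
    ← Finset.sum_range_reflect
      (fun i => (m.choose i : ℝ) * A i * B (m - i) / (Nat.factorial (m + 1))) (m + 1)]
  refine Finset.sum_congr rfl fun j hj => ?_
  have hjm : j ≤ m := Nat.lt_succ_iff.mp (Finset.mem_range.mp hj)
  simp only [Nat.add_sub_cancel]
  have h2 : m - (m - j) = j := by omega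
  rw [h2]
  have hcn : m.choose (m - j) * (m - j).factorial * j.factorial = m.factorial := by
    have h := Nat.choose_mul_factorial_mul_factorial (Nat.sub_le m j)
    rwa [h2] at h
  have hc : (m.choose (m - j) : ℝ) * (Nat.factorial (m - j)) * (Nat.factorial j)
      = Nat.factorial m := by exact_mod_cast hcn
  have hfac : (Nat.factorial (m + 1) : ℝ) = ((m : ℝ) + 1) * Nat.factorial m := by
    rw [Nat.factorial_succ]; push_cast; ring
  have hfacj : (Nat.factorial (j + 1) : ℝ) = ((j : ℝ) + 1) * Nat.factorial j := by
    rw [Nat.factorial_succ]; push_cast; ring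
  have f0 : (Nat.factorial (m - j) : ℝ) ≠ 0 := by
    exact_mod_cast (Nat.factorial_pos (m - j)).ne'
  have f1 : (Nat.factorial j : ℝ) ≠ 0 := by exact_mod_cast (Nat.factorial_pos j).ne'
  have f2 : (Nat.factorial m : ℝ) ≠ 0 := by exact_mod_cast (Nat.factorial_pos m).ne'
  have f3 : ((j : ℝ) + 1) ≠ 0 := by positivity
  have f4 : ((m : ℝ) + 1) ≠ 0 := by positivity
  rw [hfac, hfacj]
  have hcj : (m.choose j : ℝ) * (Nat.factorial (m - j)) * (Nat.factorial j)
      = Nat.factorial m := by rw [← Nat.choose_symm hjm]; exact hc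
  field_simp
  linear_combination (A (m - j) * B j) * hc

/-- Automatic differentiation recurrence for sine and cosine: if `u` is `n` times continuously
differentiable near `x₀`, `s = sin ∘ u`, `c = cos ∘ u`, then for `1 ≤ k ≤ n`:
`(s)_k = (1/k) ∑_{j=0}^{k-1} (j+1) (c)_{k-1-j} (u)_{j+1}` and
`(c)_k = -(1/k) ∑_{j=0}^{k-1} (j+1) (s)_{k-1-j} (u)_{j+1}`,
where `(f)_k = f⁽ᵏ⁾(x₀)/k!`. -/
theorem ad_sin_cos_rule (u : ℝ → ℝ) (x₀ : ℝ) (n : ℕ)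
    (hu : ContDiffAt ℝ n u x₀) (k : ℕ) (hk1 : 1 ≤ k) (hkn : k ≤ n) :
    iteratedDeriv k (fun x => Real.sin (u x)) x₀ / (Nat.factorial k) =
      (1 / (k : ℝ)) *
        ∑ j ∈ Finset.range k,
          ((j : ℝ) + 1) *
            (iteratedDeriv (k - 1 - j) (fun x => Real.cos (u x)) x₀ /
              (Nat.factorial (k - 1 - j))) *
            (iteratedDeriv (j + 1) u x₀ / (Nat.factorial (j + 1))) ∧
    iteratedDeriv k (fun x => Real.cos (u x)) x₀ / (Nat.factorial k) =
      -(1 / (k : ℝ)) *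
        ∑ j ∈ Finset.range k,
          ((j : ℝ) + 1) *
            (iteratedDeriv (k - 1 - j) (fun x => Real.sin (u x)) x₀ /
              (Nat.factorial (k - 1 - j))) *
            (iteratedDeriv (j + 1) u x₀ / (Nat.factorial (j + 1))) := by
  obtain ⟨m, rfl⟩ : ∃ m, k = m + 1 := ⟨k - 1, (Nat.succ_pred_eq_of_pos hk1).symm⟩
  obtain ⟨t, ht_mem, ht⟩ := hu.contDiffOn (le_refl _) (by simp)
  obtain ⟨s, hst, hs_open, hxs⟩ := mem_nhds_iff.mp ht_mem
  have hus : ContDiffOn ℝ n u s := ht.mono hst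
  have hkn' : ((m : ℕ) : WithTop ℕ∞) + 1 ≤ n := by exact_mod_cast hkn
  have hum : ContDiffOn ℝ m u s := hus.of_le (by exact_mod_cast le_trans (Nat.le_succ m) hkn)
  have hu' : ContDiffOn ℝ m (deriv u) s := hus.deriv_of_isOpen hs_open hkn'
  have hsin : ContDiffOn ℝ m (fun x => Real.sin (u x)) s := hum.sin
  have hcos : ContDiffOn ℝ m (fun x => Real.cos (u x)) s := hum.cos
  have hdiff_u : ∀ y ∈ s, DifferentiableAt ℝ u y := fun y hy =>
    (hus.differentiableOn (by exact_mod_cast (show n ≠ 0 by omega)) y hy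
      ).differentiableAt (hs_open.mem_nhds hy)
  have hS : iteratedDeriv (m + 1) (fun x => Real.sin (u x)) x₀
      = ∑ i ∈ range (m + 1), (m.choose i : ℝ) * iteratedDeriv i (fun x => Real.cos (u x)) x₀
          * iteratedDeriv (m - i) (deriv u) x₀ := by
    rw [iteratedDeriv_succ']
    have : iteratedDeriv m (deriv fun x => Real.sin (u x)) x₀
        = iteratedDeriv m (fun y => Real.cos (u y) * deriv u y) x₀ := by
      refine Filter.EventuallyEq.iteratedDeriv_eq m ?_
      filter_upwards [hs_open.mem_nhds hxs] with y hy
      exact ((Real.hasDerivAt_sin (u y)).comp y (hdiff_u y hy).hasDerivAt).deriv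
    rw [this]
    exact leibniz_of_isOpen hs_open m _ _ hcos hu' x₀ hxs
  have hC : iteratedDeriv (m + 1) (fun x => Real.cos (u x)) x₀
      = -∑ i ∈ range (m + 1), (m.choose i : ℝ) * iteratedDeriv i (fun x => Real.sin (u x)) x₀
          * iteratedDeriv (m - i) (deriv u) x₀ := by
    rw [iteratedDeriv_succ']
    have : iteratedDeriv m (deriv fun x => Real.cos (u x)) x₀
        = iteratedDeriv m (fun y => -(Real.sin (u y) * deriv u y)) x₀ := by
      refine Filter.EventuallyEq.iteratedDeriv_eq m ?_
      filter_upwards [hs_open.mem_nhds hxs] with y hy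
      have := ((Real.hasDerivAt_cos (u y)).comp y (hdiff_u y hy).hasDerivAt).deriv
      simpa [mul_comm, Function.comp_def] using this
    rw [this, iteratedDeriv_fun_neg m _ x₀, leibniz_of_isOpen hs_open m _ _ hsin hu' x₀ hxs]
  have hk_cast : ((m + 1 : ℕ) : ℝ) = (m : ℝ) + 1 := by push_cast; ring
  have tail : ∀ F : ℝ → ℝ,
      (∑ j ∈ range (m + 1), ((j : ℝ) + 1) *
        ((fun i => iteratedDeriv i F x₀) (m - j) / (Nat.factorial (m - j))) *
        ((fun i => iteratedDeriv i (deriv u) x₀) j / (Nat.factorial (j + 1))))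
      = ∑ j ∈ range (m + 1), ((j : ℝ) + 1) *
          (iteratedDeriv (m + 1 - 1 - j) F x₀ / (Nat.factorial (m + 1 - 1 - j))) *
          (iteratedDeriv (j + 1) u x₀ / (Nat.factorial (j + 1))) := by
    intro F
    refine Finset.sum_congr rfl fun j hj => ?_
    simp only [Nat.add_sub_cancel]
    rw [show iteratedDeriv j (deriv u) x₀ = iteratedDeriv (j + 1) u x₀ from by
      rw [iteratedDeriv_succ']]
  constructor
  · rw [hS]
    refine Eq.trans (key_sum m (fun i => iteratedDeriv i (fun x => Real.cos (u x)) x₀)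
      (fun i => iteratedDeriv i (deriv u) x₀)) ?_
    rw [hk_cast]
    exact congrArg (fun z => (1 / ((m : ℝ) + 1)) * z) (tail (fun x => Real.cos (u x)))
  · rw [hC, neg_div, neg_mul]
    refine neg_inj.mpr ?_
    refine Eq.trans (key_sum m (fun i => iteratedDeriv i (fun x => Real.sin (u x)) x₀)
      (fun i => iteratedDeriv i (deriv u) x₀)) ?_
    rw [hk_cast]
    exact congrArg (fun z => (1 / ((m : ℝ) + 1)) * z) (tail (fun x => Real.sin (u x)))
end
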